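/- If w is a prefix normal word, then for every k ≥ 0, the words a^k w and w b^k are prefix normal. -/

import Mathlib

/- Binary words are `List Bool`, with letter `a = false` and `b = true`
   (so that `a < b` in the `Bool` order). -/

/-- number of `a`'s in the prefix of length `k` -/
def Pa (w : List Bool) (k : ℕ) : ℕ := (w.take k).count false

/-- number of `b`'s in the prefix of length `k` -/
def Pb (w : List Bool) (k : ℕ) : ℕ := (w.take k).count true

/-- maximum number of `a`'s in a factor of `w` of length `k` -/
noncomputable def Fa (w : List Bool) (k : ℕ) : ℕ :=
  sSup {n | ∃ v : List Bool, v <:+: w ∧ v.length = k ∧ v.count false = n}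

/-- maximum number of `b`'s in a factor of `w` of length `k` -/
noncomputable def Fb (w : List Bool) (k : ℕ) : ℕ :=
  sSup {n | ∃ v : List Bool, v <:+: w ∧ v.length = k ∧ v.count true = n}

/-- minimum number of `a`'s in a factor of `w` of length `k` -/
noncomputable def fa (w : List Bool) (k : ℕ) : ℕ :=
  sInf {n | ∃ v : List Bool, v <:+: w ∧ v.length = k ∧ v.count false = n}

/-- `w` is prefix normal w.r.t. `a`: no factor has more `a`'s than the prefix
    of the same length -/
def PrefixNormal (w : List Bool) : Prop :=
  ∀ v : List Bool, v <:+: w → v.count false ≤ Pa w v.length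

/-- position of the `i`-th `a` in `w` -/
noncomputable def posA (w : List Bool) (i : ℕ) : ℕ := sInf {k | Pa w k = i}

/-- `u` is the prefix normal form of `w` w.r.t. `a` -/
def IsPNFa (w u : List Bool) : Prop :=
  u.length = w.length ∧ ∀ k ≤ w.length, Pa u k = Fa w k ∧ Fa u k = Fa w k

/-- `u` is the prefix normal form of `w` w.r.t. `b` -/
def IsPNFb (w u : List Bool) : Prop :=
  u.length = w.length ∧ ∀ k ≤ w.length, Pb u k = Fb w k ∧ Fb u k = Fb w k

/-- the Parikh set of `w`: Parikh vectors `(|v|_a, |v|_b)` of factors of `w` -/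
def ParikhSet (w : List Bool) : Set (ℕ × ℕ) :=
  {p | ∃ v : List Bool, v <:+: w ∧ p = (v.count false, v.count true)}

/-- Lyndon word: strictly lexicographically smaller than each proper nonempty suffix -/
def IsLyndon (w : List Bool) : Prop :=
  w ≠ [] ∧ ∀ v : List Bool, v <:+ w → v ≠ [] → v ≠ w → List.Lex (· < ·) w v

/-- pre-necklace: a power of the letter `b`, or a prefix of a Lyndon word -/
def PreNecklace (w : List Bool) : Prop :=
  (∃ n, w = List.replicate n true) ∨ ∃ v, IsLyndon v ∧ w <+: v

lemma infix_split {α : Type*} {v l₁ l₂ : List α} (h : v <:+: l₁ ++ l₂) :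
    ∃ v₁ v₂, v = v₁ ++ v₂ ∧ v₁ <:+: l₁ ∧ v₂ <:+: l₂ := by
  obtain ⟨s, t, hst⟩ := h
  set n := l₁.length - s.length with hn
  refine ⟨v.take n, v.drop n, (List.take_append_drop _ _).symm, ?_, ?_⟩
  · have h1 : l₁ = (s ++ v ++ t).take l₁.length := by rw [hst, List.take_left]
    rw [List.append_assoc, List.take_append,
        List.take_append] at h1
    exact ⟨_, _, by rw [List.append_assoc]; exact h1.symm⟩
  · have h1 : l₂ = (s ++ v ++ t).drop l₁.length := by rw [hst, List.drop_left]
    rw [List.append_assoc, List.drop_append,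
        List.drop_append] at h1
    exact ⟨_, _, by rw [List.append_assoc]; exact h1.symm⟩


lemma Pa_mono (w : List Bool) {m n : ℕ} (h : m ≤ n) : Pa w m ≤ Pa w n :=
  ((List.take_prefix_take_left h).sublist.count_le _ : _)

lemma Pa_le (w : List Bool) (m : ℕ) : Pa w m ≤ m :=
  le_trans List.count_le_length (List.length_take_le m w)

lemma Pa_sub (w : List Bool) (x d : ℕ) : Pa w x ≤ Pa w (x - d) + d := by
  have h1 : w.take x = w.take (x - d) ++ (w.take x).drop (x - d) := by
    conv_lhs => rw [← List.take_append_drop (x - d) (w.take x)]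
    rw [List.take_take, min_eq_left (Nat.sub_le _ _)]
  have h2 : ((w.take x).drop (x - d)).length ≤ d := by
    simp only [List.length_drop, List.length_take]
    omega
  calc Pa w x = (w.take (x-d) ++ (w.take x).drop (x-d)).count false := by rw [Pa, ← h1]
    _ ≤ Pa w (x - d) + d := by
        rw [List.count_append]
        exact Nat.add_le_add le_rfl (le_trans List.count_le_length h2)

lemma Pa_left (w : List Bool) (k m : ℕ) :
    Pa (List.replicate k false ++ w) m = min m k + Pa w (m - k) := by
  simp [Pa, List.take_append, List.take_replicate, List.count_append,
    List.count_replicate]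

lemma Pa_right (w : List Bool) (k m : ℕ) :
    Pa (w ++ List.replicate k true) m = Pa w m := by
  simp [Pa, List.take_append, List.take_replicate, List.count_append,
    List.count_replicate]


theorem stmt14 (w : List Bool) (h : PrefixNormal w) (k : ℕ) :
    PrefixNormal (List.replicate k false ++ w) ∧
      PrefixNormal (w ++ List.replicate k true) := by
  constructor
  · intro v hv
    obtain ⟨v₁, v₂, rfl, hv₁, hv₂⟩ := infix_split hv
    obtain ⟨j, hjk, rfl⟩ := List.sublist_replicate_iff.1 hv₁.sublist
    have hc2 : v₂.count false ≤ Pa w v₂.length := h v₂ hv₂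
    have hcl : v₂.count false ≤ v₂.length := List.count_le_length
    rw [List.count_append, List.length_append, Pa_left, List.count_replicate_self,
      List.length_replicate]

    set m₂ := v₂.length
    rcases le_total (j + m₂) k with hk | hk
    · have : Pa w (j + m₂ - k) = 0 := by
        have : j + m₂ - k = 0 := by omega
        simp [this, Pa]
      omega
    · have h3 : Pa w m₂ ≤ Pa w (m₂ - (k - j)) + (k - j) := Pa_sub w m₂ (k - j)
      have h4 : m₂ - (k - j) = j + m₂ - k := by omega
      rw [h4] at h3
      omega
  · intro v hv
    obtain ⟨v₁, v₂, rfl, hv₁, hv₂⟩ := infix_split hv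
    have hval : v₂.count false = 0 := by
      refine List.count_eq_zero.2 fun hb => ?_
      simpa using List.eq_of_mem_replicate (hv₂.sublist.subset hb)
    have hc1 : v₁.count false ≤ Pa w v₁.length := h v₁ hv₁
    rw [List.count_append, List.length_append, Pa_right, hval]
    exact le_trans (by omega) (Pa_mono w (Nat.le_add_right _ _))
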